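/- arXiv:2109.02565 — 2 statements merged into one kernel-verified Lean document; each statement's English description precedes it below -/
import Mathlib

section
/- There is an absolute constant C such that for all s ∈ (0,1], all α > 0 and all y ∈ ℝ: (i) for every differentiable g : ℝ → ℝ with g, g' locally integrable, |δ_α[L_s, g](y)| ≤ C·s·∫_{|t| ≤ α} ( |g'(y+t)| + ⟨α⟩^{−1}·|g(y+t)| ) dt; (ii) for all odd differentiable g₁, g₂ : ℝ → ℝ with g_i, g_i' square-integrable, |δ_α[g₁, g₂](y)| ≤ C·min{α^{−1/2}, α^{−3/2}}·( ‖g₂‖_{H¹}·∫_{|t| ≤ α} |g₁(y+t)| dt + ‖g₁‖_{H¹}·∫_{|t| ≤ α} |g₂(y+t)| dt ). -/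
open MeasureTheory Real Set Filter

/-- Sliding average `⨍_α f(y) = (1/α) ∫_{y-α}^{y} f(z) dz`. -/
noncomputable def fint (α : ℝ) (f : ℝ → ℝ) (y : ℝ) : ℝ :=
  (1 / α) * ∫ z in (y - α)..y, f z

/-- Finite difference slope `Δ_α f(y) = (f(y) - f(y-α))/α`. -/
noncomputable def slopeOp (α : ℝ) (f : ℝ → ℝ) (y : ℝ) : ℝ :=
  (f y - f (y - α)) / α

/-- The profile `L_s(y) = (2s/π) arctan((1+s²/3) y)`. -/
noncomputable def Ls (s y : ℝ) : ℝ := (2 * s / Real.pi) * Real.arctan ((1 + s ^ 2 / 3) * y)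

/-- `δ_α[f,g](y) = ⨍_α f ⨍_α g - ⨍_{-α} f ⨍_{-α} g`. -/
noncomputable def deltaOp (α : ℝ) (f g : ℝ → ℝ) (y : ℝ) : ℝ :=
  fint α f y * fint α g y - fint (-α) f y * fint (-α) g y

/-- `J_α[f,g](y) = ⨍_α f ⨍_α g - 2 f g + ⨍_{-α} f ⨍_{-α} g`. -/
noncomputable def Jop (α : ℝ) (f g : ℝ → ℝ) (y : ℝ) : ℝ :=
  fint α f y * fint α g y - 2 * f y * g y + fint (-α) f y * fint (-α) g y

/-- The `H¹` norm `(∫ g² + ∫ (g')²)^{1/2}`. -/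
noncomputable def H1norm (g : ℝ → ℝ) : ℝ :=
  Real.sqrt ((∫ y : ℝ, g y ^ 2) + ∫ y : ℝ, deriv g y ^ 2)

private lemma arctan_lip (a b : ℝ) : |Real.arctan b - Real.arctan a| ≤ |b - a| := by
  have h : LipschitzWith 1 Real.arctan := by
    apply lipschitzWith_of_nnnorm_deriv_le Real.differentiable_arctan
    intro x
    rw [Real.deriv_arctan]
    rw [← NNReal.coe_le_coe, coe_nnnorm, NNReal.coe_one, Real.norm_eq_abs,
      abs_of_pos (by positivity), div_le_one (by positivity)]
    nlinarith [sq_nonneg x]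
  simpa [Real.dist_eq] using h.dist_le_mul b a

private lemma abs_Ls_le {s : ℝ} (hs : 0 < s) (x : ℝ) : |Ls s x| ≤ s := by
  unfold Ls
  rw [abs_mul, abs_of_pos (show (0:ℝ) < 2 * s / Real.pi by positivity)]
  have h2 : |Real.arctan ((1 + s ^ 2 / 3) * x)| ≤ Real.pi / 2 := by
    rw [abs_le]
    exact ⟨(Real.neg_pi_div_two_lt_arctan _).le, (Real.arctan_lt_pi_div_two _).le⟩
  calc 2 * s / Real.pi * |Real.arctan ((1 + s ^ 2 / 3) * x)|
      ≤ 2 * s / Real.pi * (Real.pi / 2) := by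
        exact mul_le_mul_of_nonneg_left h2 (by positivity)
    _ = s := by field_simp

private lemma Ls_lip {s : ℝ} (hs : 0 < s) (hs1 : s ≤ 1) (a b : ℝ) :
    |Ls s b - Ls s a| ≤ s * |b - a| := by
  unfold Ls
  rw [← mul_sub, abs_mul, abs_of_pos (show (0:ℝ) < 2 * s / Real.pi by positivity)]
  have h1 := arctan_lip ((1 + s ^ 2 / 3) * a) ((1 + s ^ 2 / 3) * b)
  have hk : |(1 + s ^ 2 / 3) * b - (1 + s ^ 2 / 3) * a| = (1 + s ^ 2 / 3) * |b - a| := by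
    rw [← mul_sub, abs_mul, abs_of_pos (by positivity)]
  calc 2 * s / Real.pi * |Real.arctan ((1 + s ^ 2 / 3) * b) - Real.arctan ((1 + s ^ 2 / 3) * a)|
      ≤ 2 * s / Real.pi * ((1 + s ^ 2 / 3) * |b - a|) := by
        apply mul_le_mul_of_nonneg_left _ (by positivity)
        rw [← hk]; exact h1
    _ ≤ s * |b - a| := by
        rcases eq_or_ne a b with rfl | hab
        · simp
        · have hco : 2 * s / Real.pi * (1 + s ^ 2 / 3) ≤ s := by
            rw [div_mul_eq_mul_div, div_le_iff₀ Real.pi_pos]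
            nlinarith [Real.pi_gt_three, mul_nonneg hs.le hs.le, sq_nonneg (1 - s),
              mul_pos hs hs]
          calc 2 * s / Real.pi * ((1 + s ^ 2 / 3) * |b - a|)
              = 2 * s / Real.pi * (1 + s ^ 2 / 3) * |b - a| := by ring
            _ ≤ s * |b - a| := mul_le_mul_of_nonneg_right hco (abs_nonneg _)

private lemma setIcc_eq {α : ℝ} (hα : 0 < α) (y : ℝ) (F : ℝ → ℝ) :
    ∫ t in Set.Icc (-α) α, F (y + t) = ∫ z in (y - α)..(y + α), F z := by
  rw [MeasureTheory.integral_Icc_eq_integral_Ioc,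
    ← intervalIntegral.integral_of_le (show -α ≤ α by linarith),
    intervalIntegral.integral_comp_add_left, show y + -α = y - α by ring]

private lemma abs_sub_interval {f : ℝ → ℝ} {a b c d : ℝ} (hac : a ≤ c) (hcd : c ≤ d)
    (hdb : d ≤ b) (hi : IntervalIntegrable f volume a b) :
    |∫ x in c..d, f x| ≤ ∫ x in a..b, |f x| := by
  refine (intervalIntegral.abs_integral_le_integral_abs hcd).trans ?_
  refine intervalIntegral.integral_mono_interval hac hcd hdb ?_ hi.abs
  filter_upwards with x using abs_nonneg _

private lemma fint_neg {α : ℝ} (hα : α ≠ 0) (f : ℝ → ℝ) (y : ℝ) :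
    fint (-α) f y = (1 / α) * ∫ z in y..(y + α), f z := by
  unfold fint
  rw [show y - -α = y + α by ring, intervalIntegral.integral_symm]
  field_simp

private lemma abs_fint_le {f : ℝ → ℝ} {α : ℝ} (hα : 0 < α) (y : ℝ)
    (hi : IntervalIntegrable f volume (y - α) (y + α)) :
    |fint α f y| ≤ (1 / α) * ∫ z in (y - α)..(y + α), |f z| := by
  unfold fint
  rw [abs_mul, abs_of_pos (show (0:ℝ) < 1/α by positivity)]
  exact mul_le_mul_of_nonneg_left
    (abs_sub_interval le_rfl (by linarith) (by linarith) hi) (by positivity)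

private lemma abs_fint_neg_le {f : ℝ → ℝ} {α : ℝ} (hα : 0 < α) (y : ℝ)
    (hi : IntervalIntegrable f volume (y - α) (y + α)) :
    |fint (-α) f y| ≤ (1 / α) * ∫ z in (y - α)..(y + α), |f z| := by
  rw [fint_neg hα.ne' f y, abs_mul, abs_of_pos (show (0:ℝ) < 1/α by positivity)]
  exact mul_le_mul_of_nonneg_left
    (abs_sub_interval (by linarith) (by linarith) le_rfl hi) (by positivity)

private lemma abs_fint_le_sup {f : ℝ → ℝ} {α M : ℝ} (hα : 0 < α) (y : ℝ)
    (hM : ∀ x, |f x| ≤ M) : |fint α f y| ≤ M := by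
  unfold fint
  rw [abs_mul, abs_of_pos (show (0:ℝ) < 1/α by positivity)]
  have h := intervalIntegral.norm_integral_le_of_norm_le_const
    (C := M) (a := y - α) (b := y) (f := f) (fun x _ => hM x)
  rw [Real.norm_eq_abs, show y - (y - α) = α by ring, abs_of_pos hα] at h
  calc (1/α) * |∫ z in (y - α)..y, f z| ≤ (1/α) * (M * α) :=
        mul_le_mul_of_nonneg_left h (by positivity)
    _ = M := by field_simp

private lemma abs_fint_neg_le_sup {f : ℝ → ℝ} {α M : ℝ} (hα : 0 < α) (y : ℝ)
    (hM : ∀ x, |f x| ≤ M) : |fint (-α) f y| ≤ M := by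
  rw [fint_neg hα.ne' f y]
  rw [abs_mul, abs_of_pos (show (0:ℝ) < 1/α by positivity)]
  have h := intervalIntegral.norm_integral_le_of_norm_le_const
    (C := M) (a := y) (b := y + α) (f := f) (fun x _ => hM x)
  rw [Real.norm_eq_abs, show y + α - y = α by ring, abs_of_pos hα] at h
  calc (1/α) * |∫ z in y..(y + α), f z| ≤ (1/α) * (M * α) :=
        mul_le_mul_of_nonneg_left h (by positivity)
    _ = M := by field_simp

private lemma fint_diff_bound {f : ℝ → ℝ} {α M : ℝ} (hα : 0 < α) (y : ℝ)
    (hfi : IntervalIntegrable f volume (y - α) (y + α))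
    (hbd : ∀ z ∈ Set.Ioc (y - α) y, |f z - f (z + α)| ≤ M) :
    |fint α f y - fint (-α) f y| ≤ M := by
  have h1 : IntervalIntegrable f volume (y - α) y := by
    apply hfi.mono_set
    rw [Set.uIcc_of_le (by linarith), Set.uIcc_of_le (by linarith)]
    exact Set.Icc_subset_Icc le_rfl (by linarith)
  have h2 : IntervalIntegrable (fun z => f (z + α)) volume (y - α) y := by
    have h3 : IntervalIntegrable f volume y (y + α) := by
      apply hfi.mono_set
      rw [Set.uIcc_of_le (by linarith), Set.uIcc_of_le (by linarith)]
      exact Set.Icc_subset_Icc (by linarith) le_rfl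
    have := h3.comp_add_right α
    rwa [show y - α = y - α by ring, show y + α - α = y by ring] at this
  rw [fint_neg hα.ne' f y]
  unfold fint
  rw [← mul_sub]
  have hshift : (∫ z in y..(y + α), f z) = ∫ z in (y - α)..y, f (z + α) := by
    rw [intervalIntegral.integral_comp_add_right]
    congr 1 <;> ring
  rw [hshift, ← intervalIntegral.integral_sub h1 h2]
  rw [abs_mul, abs_of_pos (show (0:ℝ) < 1/α by positivity)]
  have h := intervalIntegral.norm_integral_le_of_norm_le_const
    (C := M) (a := y - α) (b := y) (f := fun z => f z - f (z + α)) ?_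
  · rw [Real.norm_eq_abs, show y - (y - α) = α by ring, abs_of_pos hα] at h
    calc (1/α) * |∫ z in (y - α)..y, (f z - f (z + α))| ≤ (1/α) * (M * α) :=
          mul_le_mul_of_nonneg_left h (by positivity)
      _ = M := by field_simp
  · intro x hx
    rw [Set.uIoc_of_le (by linarith)] at hx
    exact hbd x hx

private lemma memLp_intervalIntegrable {f : ℝ → ℝ} (hf : MemLp f 2 volume) (a b : ℝ) :
    IntervalIntegrable f volume a b := by
  rw [intervalIntegrable_iff]
  have hfin : IsFiniteMeasure (volume.restrict (Set.uIoc a b)) := by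
    constructor
    rw [Measure.restrict_apply_univ, Set.uIoc, Real.volume_Ioc]
    exact ENNReal.ofReal_lt_top
  exact (hf.restrict (Set.uIoc a b)).integrable (by norm_num)

private lemma cs_lemma {f : ℝ → ℝ} (hf : MemLp f 2 volume) {a b : ℝ} (hab : a ≤ b) :
    ∫ x in a..b, |f x| ≤ Real.sqrt (b - a) * Real.sqrt (∫ x : ℝ, f x ^ 2) := by
  obtain ⟨T, hT⟩ : ∃ T : ℝ, T = ∫ x : ℝ, f x ^ 2 := ⟨_, rfl⟩
  rw [← hT]
  have hT0 : 0 ≤ T := hT ▸ integral_nonneg fun x => sq_nonneg _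
  have hsq : Integrable (fun x => f x ^ 2) := hf.integrable_sq
  have hfi : IntervalIntegrable f volume a b := memLp_intervalIntegrable hf a b
  rcases eq_or_lt_of_le hT0 with hTz | hTpos
  · -- T = 0 : f = 0 a.e.
    have hae : (fun x => f x ^ 2) =ᵐ[volume] 0 :=
      (integral_eq_zero_iff_of_nonneg (fun x => sq_nonneg _) hsq).1 (hT ▸ hTz.symm)
    have hae' : (fun x => |f x|) =ᵐ[volume] 0 := by
      filter_upwards [hae] with x hx
      simp only [Pi.zero_apply] at hx ⊢
      nlinarith [sq_abs (f x), abs_nonneg (f x)]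
    have : (∫ x in a..b, |f x|) = 0 := by
      rw [intervalIntegral.integral_of_le hab]
      exact integral_eq_zero_of_ae (ae_restrict_of_ae hae')
    rw [this]; positivity
  · rcases eq_or_lt_of_le hab with rfl | hab'
    · simp
    · have hm : 0 < b - a := by linarith
      obtain ⟨c, hcpos, hc⟩ : ∃ c : ℝ, 0 < c ∧ c = Real.sqrt (b - a) / Real.sqrt T :=
        ⟨_, by positivity, rfl⟩
      have step1 : ∫ x in a..b, |f x| ≤ ∫ x in a..b, (c * f x ^ 2 + c⁻¹) / 2 := by
        apply intervalIntegral.integral_mono_on hab hfi.abs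
        · exact ((hsq.intervalIntegrable.const_mul c).add intervalIntegrable_const).div_const 2
        · intro x _
          have h1 : c * c⁻¹ = 1 := mul_inv_cancel₀ hcpos.ne'
          rw [le_div_iff₀ (by norm_num : (0:ℝ) < 2), ← mul_le_mul_iff_right₀ hcpos]
          have h2 : c ^ 2 * |f x| ^ 2 = c ^ 2 * f x ^ 2 := by rw [sq_abs]
          nlinarith [sq_nonneg (c * |f x| - 1), h2, h1]
      have step2 : ∫ x in a..b, (c * f x ^ 2 + c⁻¹) / 2 ≤ (c * T + (b - a) * c⁻¹) / 2 := by
        rw [intervalIntegral.integral_div, intervalIntegral.integral_add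
            (hsq.intervalIntegrable.const_mul c) intervalIntegrable_const,
          intervalIntegral.integral_const_mul, intervalIntegral.integral_const,
          show b - a = b - a by rfl, smul_eq_mul]
        have hle : ∫ x in a..b, f x ^ 2 ≤ T := by
          rw [intervalIntegral.integral_of_le hab, hT]
          exact setIntegral_le_integral hsq (Filter.Eventually.of_forall fun x => sq_nonneg _)
        have := mul_le_mul_of_nonneg_left hle hcpos.le
        linarith
      have hval : (c * T + (b - a) * c⁻¹) / 2 = Real.sqrt (b - a) * Real.sqrt T := by
        have h1 : Real.sqrt T ^ 2 = T := Real.sq_sqrt hT0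
        have h2 : Real.sqrt (b - a) ^ 2 = b - a := Real.sq_sqrt hm.le
        have h3 : (0:ℝ) < Real.sqrt T := Real.sqrt_pos.mpr hTpos
        have h4 : (0:ℝ) < Real.sqrt (b - a) := Real.sqrt_pos.mpr hm
        rw [hc]
        field_simp
        nlinarith [h1, h2]
      linarith [step1, step2, hval.le]

private lemma sqrt_sq_le_H1_left (g : ℝ → ℝ) :
    Real.sqrt (∫ x : ℝ, g x ^ 2) ≤ H1norm g := by
  apply Real.sqrt_le_sqrt
  have : (0:ℝ) ≤ ∫ x : ℝ, deriv g x ^ 2 := integral_nonneg fun x => sq_nonneg _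
  linarith

private lemma sqrt_sq_le_H1_right (g : ℝ → ℝ) :
    Real.sqrt (∫ x : ℝ, deriv g x ^ 2) ≤ H1norm g := by
  apply Real.sqrt_le_sqrt
  have : (0:ℝ) ≤ ∫ x : ℝ, g x ^ 2 := integral_nonneg fun x => sq_nonneg _
  linarith

private lemma rpow_half_eq {α : ℝ} (hα : 0 < α) : α ^ (-(1:ℝ)/2) = (Real.sqrt α)⁻¹ := by
  rw [show -(1:ℝ)/2 = -(1/2) by ring, Real.rpow_neg hα.le, ← Real.sqrt_eq_rpow]

private lemma rpow_threehalf_eq {α : ℝ} (hα : 0 < α) :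
    α ^ (-(3:ℝ)/2) = α⁻¹ * (Real.sqrt α)⁻¹ := by
  rw [show -(3:ℝ)/2 = (-1) + (-(1:ℝ)/2) by ring, Real.rpow_add hα, Real.rpow_neg_one,
    rpow_half_eq hα]

private lemma min_bound {s α : ℝ} (hs : 0 ≤ s) (hα : 0 < α) :
    min (2 * s) (s * α) ≤ 2 * Real.sqrt 2 * s * α * (Real.sqrt (1 + α ^ 2))⁻¹ := by
  have h2 : (0:ℝ) < Real.sqrt (1 + α ^ 2) := Real.sqrt_pos.mpr (by positivity)
  have hs2 : (0:ℝ) < Real.sqrt 2 := Real.sqrt_pos.mpr (by norm_num)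
  have hsq2 : Real.sqrt 2 ^ 2 = 2 := Real.sq_sqrt (by norm_num)
  rcases le_total α 1 with h | h
  · refine (min_le_right _ _).trans ?_
    rw [show 2 * Real.sqrt 2 * s * α * (Real.sqrt (1 + α ^ 2))⁻¹
        = s * α * (2 * Real.sqrt 2 / Real.sqrt (1 + α ^ 2)) by ring]
    nth_rewrite 1 [← mul_one (s * α)]
    apply mul_le_mul_of_nonneg_left _ (by positivity)
    rw [le_div_iff₀ h2, one_mul]
    have hle : Real.sqrt (1 + α ^ 2) ≤ Real.sqrt 2 := Real.sqrt_le_sqrt (by nlinarith)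
    nlinarith
  · refine (min_le_left _ _).trans ?_
    rw [show 2 * Real.sqrt 2 * s * α * (Real.sqrt (1 + α ^ 2))⁻¹
        = 2 * s * (Real.sqrt 2 * α / Real.sqrt (1 + α ^ 2)) by ring]
    nth_rewrite 1 [← mul_one (2 * s)]
    apply mul_le_mul_of_nonneg_left _ (by positivity)
    rw [le_div_iff₀ h2, one_mul]
    have h22 : Real.sqrt (2 * α ^ 2) = Real.sqrt 2 * α := by
      rw [Real.sqrt_mul (by norm_num), Real.sqrt_sq (by linarith)]
    have hle : Real.sqrt (1 + α ^ 2) ≤ Real.sqrt (2 * α ^ 2) := Real.sqrt_le_sqrt (by nlinarith)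
    linarith [h22 ▸ hle]

private lemma one_div_mul_sqrt {α : ℝ} (hα : 0 < α) :
    (1/α) * Real.sqrt α = (Real.sqrt α)⁻¹ := by
  have h := Real.mul_self_sqrt hα.le
  have hs : 0 < Real.sqrt α := Real.sqrt_pos.mpr hα
  field_simp
  exact Real.sq_sqrt hα.le

private lemma abs_sub' (a b : ℝ) : |a - b| ≤ |a| + |b| := by
  calc |a - b| = |a + (-b)| := by ring_nf
    _ ≤ |a| + |(-b)| := abs_add_le _ _
    _ = |a| + |b| := by rw [abs_neg]

private lemma ftc_diff_bound {g : ℝ → ℝ} {α : ℝ} (hα : 0 < α) (y : ℝ)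
    (hg : Differentiable ℝ g)
    (hgi : IntervalIntegrable g volume (y - α) (y + α))
    (hgi' : IntervalIntegrable (deriv g) volume (y - α) (y + α)) :
    |fint α g y - fint (-α) g y| ≤ ∫ z in (y - α)..(y + α), |deriv g z| := by
  apply fint_diff_bound hα y hgi
  intro z hz
  rw [Set.mem_Ioc] at hz
  have hftc : ∫ t in z..(z + α), deriv g t = g (z + α) - g z := by
    apply intervalIntegral.integral_deriv_eq_sub (fun x _ => hg.differentiableAt)
    apply hgi'.mono_set
    rw [Set.uIcc_of_le (by linarith), Set.uIcc_of_le (by linarith)]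
    exact Set.Icc_subset_Icc (by linarith [hz.1]) (by linarith [hz.2])
  rw [abs_sub_comm, ← hftc]
  exact abs_sub_interval (by linarith [hz.1]) (by linarith) (by linarith [hz.2]) hgi'

/-- Localized (integral-form) bounds on `δ_α[L_s, g]` and `δ_α[g₁, g₂]`. -/
theorem deltaOp_local_bounds :
    ∃ C : ℝ, 0 < C ∧ ∀ s : ℝ, 0 < s → s ≤ 1 → ∀ α : ℝ, 0 < α → ∀ y : ℝ,
      (∀ g : ℝ → ℝ, Differentiable ℝ g → LocallyIntegrable g →
          LocallyIntegrable (deriv g) →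
        |deltaOp α (Ls s) g y| ≤ C * s *
          ∫ t in Set.Icc (-α) α,
            (|deriv g (y + t)| + (Real.sqrt (1 + α ^ 2))⁻¹ * |g (y + t)|)) ∧
      (∀ g₁ g₂ : ℝ → ℝ, (∀ x : ℝ, g₁ (-x) = - g₁ x) → (∀ x : ℝ, g₂ (-x) = - g₂ x) →
          Differentiable ℝ g₁ → Differentiable ℝ g₂ →
          MemLp g₁ 2 volume → MemLp (deriv g₁) 2 volume →
          MemLp g₂ 2 volume → MemLp (deriv g₂) 2 volume →
        |deltaOp α g₁ g₂ y| ≤ C * min (α ^ (-(1:ℝ)/2)) (α ^ (-(3:ℝ)/2)) *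
          ((H1norm g₂) * (∫ t in Set.Icc (-α) α, |g₁ (y + t)|)
            + (H1norm g₁) * ∫ t in Set.Icc (-α) α, |g₂ (y + t)|)) := by
  refine ⟨3, by norm_num, fun s hs hs1 α hα y => ⟨?_, ?_⟩⟩
  · -- Part (i)
    intro g hg hgl hgl'
    have hgi : IntervalIntegrable g volume (y - α) (y + α) := by
      rw [intervalIntegrable_iff']
      exact hgl.integrableOn_isCompact isCompact_uIcc
    have hgi' : IntervalIntegrable (deriv g) volume (y - α) (y + α) := by
      rw [intervalIntegrable_iff']
      exact hgl'.integrableOn_isCompact isCompact_uIcc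
    have hLc : Continuous (Ls s) := by
      unfold Ls
      exact continuous_const.mul (Real.continuous_arctan.comp (continuous_const.mul continuous_id))
    have hLi : IntervalIntegrable (Ls s) volume (y - α) (y + α) :=
      hLc.intervalIntegrable _ _
    set c : ℝ := (Real.sqrt (1 + α ^ 2))⁻¹ with hcdef
    set D := ∫ z in (y - α)..(y + α), |deriv g z| with hD
    set G := ∫ z in (y - α)..(y + α), |g z| with hG
    have hD0 : 0 ≤ D :=
      intervalIntegral.integral_nonneg (by linarith) (fun x _ => abs_nonneg _)
    have hG0 : 0 ≤ G :=
      intervalIntegral.integral_nonneg (by linarith) (fun x _ => abs_nonneg _)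
    have hcpos : (0:ℝ) < c := by rw [hcdef]; positivity
    have hRHS : (∫ t in Set.Icc (-α) α,
        (|deriv g (y + t)| + c * |g (y + t)|)) = D + c * G := by
      rw [setIcc_eq hα y (fun z => |deriv g z| + c * |g z|),
        intervalIntegral.integral_add hgi'.abs (hgi.abs.const_mul _),
        intervalIntegral.integral_const_mul]
    have hA : |fint α (Ls s) y| ≤ s := abs_fint_le_sup hα y (abs_Ls_le hs)
    have hB : |fint α g y - fint (-α) g y| ≤ D := ftc_diff_bound hα y hg hgi hgi'
    have hC : |fint α (Ls s) y - fint (-α) (Ls s) y| ≤ min (2 * s) (s * α) := by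
      apply le_min
      · calc |fint α (Ls s) y - fint (-α) (Ls s) y|
            ≤ |fint α (Ls s) y| + |fint (-α) (Ls s) y| := abs_sub' _ _
          _ ≤ s + s := add_le_add (abs_fint_le_sup hα y (abs_Ls_le hs))
              (abs_fint_neg_le_sup hα y (abs_Ls_le hs))
          _ = 2 * s := by ring
      · apply fint_diff_bound hα y hLi
        intro z _
        have h := Ls_lip hs hs1 (z + α) z
        rwa [show z - (z + α) = -α by ring, abs_neg, abs_of_pos hα] at h
    have hCmin : |fint α (Ls s) y - fint (-α) (Ls s) y|
        ≤ 2 * Real.sqrt 2 * s * α * c := hC.trans (min_bound hs.le hα)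
    have hDg : |fint (-α) g y| ≤ (1/α) * G := abs_fint_neg_le hα y hgi
    have hdec : deltaOp α (Ls s) g y =
        fint α (Ls s) y * (fint α g y - fint (-α) g y)
        + (fint α (Ls s) y - fint (-α) (Ls s) y) * fint (-α) g y := by
      unfold deltaOp; ring
    rw [hdec, hRHS]
    have hsqrt2 : Real.sqrt 2 ≤ 3/2 := by
      nlinarith [Real.sq_sqrt (show (0:ℝ) ≤ 2 by norm_num), Real.sqrt_nonneg 2]
    calc |fint α (Ls s) y * (fint α g y - fint (-α) g y)
          + (fint α (Ls s) y - fint (-α) (Ls s) y) * fint (-α) g y|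
        ≤ |fint α (Ls s) y| * |fint α g y - fint (-α) g y|
          + |fint α (Ls s) y - fint (-α) (Ls s) y| * |fint (-α) g y| := by
          refine (abs_add_le _ _).trans ?_
          rw [abs_mul, abs_mul]
      _ ≤ s * D + (2 * Real.sqrt 2 * s * α * c) * ((1/α) * G) := by
          apply add_le_add
          · exact mul_le_mul hA hB (abs_nonneg _) hs.le
          · exact mul_le_mul hCmin hDg (abs_nonneg _) (by positivity)
      _ = s * D + 2 * Real.sqrt 2 * s * (c * G) := by
          field_simp
      _ ≤ 3 * s * (D + c * G) := by
          have h1 : 0 ≤ s * D := mul_nonneg hs.le hD0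
          have h2 : 0 ≤ s * (c * G) := mul_nonneg hs.le (mul_nonneg hcpos.le hG0)
          nlinarith [hsqrt2]
  · -- Part (ii)
    intro g₁ g₂ _ _ hd₁ hd₂ hm₁ hm₁' hm₂ hm₂'
    have hgi₁ : IntervalIntegrable g₁ volume (y - α) (y + α) :=
      hd₁.continuous.intervalIntegrable _ _
    have hgi₂ : IntervalIntegrable g₂ volume (y - α) (y + α) :=
      hd₂.continuous.intervalIntegrable _ _
    have hgi₁' : IntervalIntegrable (deriv g₁) volume (y - α) (y + α) :=
      memLp_intervalIntegrable hm₁' _ _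
    have hgi₂' : IntervalIntegrable (deriv g₂) volume (y - α) (y + α) :=
      memLp_intervalIntegrable hm₂' _ _
    set G₁ := ∫ z in (y - α)..(y + α), |g₁ z| with hG₁
    set G₂ := ∫ z in (y - α)..(y + α), |g₂ z| with hG₂
    have hG₁0 : 0 ≤ G₁ :=
      intervalIntegral.integral_nonneg (by linarith) (fun x _ => abs_nonneg _)
    have hG₂0 : 0 ≤ G₂ :=
      intervalIntegral.integral_nonneg (by linarith) (fun x _ => abs_nonneg _)
    have hH₁0 : 0 ≤ H1norm g₁ := Real.sqrt_nonneg _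
    have hH₂0 : 0 ≤ H1norm g₂ := Real.sqrt_nonneg _
    have hI₁ : (∫ t in Set.Icc (-α) α, |g₁ (y + t)|) = G₁ :=
      setIcc_eq hα y (fun z => |g₁ z|)
    have hI₂ : (∫ t in Set.Icc (-α) α, |g₂ (y + t)|) = G₂ :=
      setIcc_eq hα y (fun z => |g₂ z|)
    have hsa : 0 < Real.sqrt α := Real.sqrt_pos.mpr hα
    -- difference bound via FTC + Cauchy-Schwarz
    have diffb : ∀ g : ℝ → ℝ, Differentiable ℝ g → MemLp (deriv g) 2 volume →
        IntervalIntegrable g volume (y - α) (y + α) →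
        |fint α g y - fint (-α) g y| ≤ Real.sqrt (2 * α) * H1norm g := by
      intro g hg hg' hgi
      have hgi' := memLp_intervalIntegrable hg' (y - α) (y + α)
      refine (ftc_diff_bound hα y hg hgi hgi').trans ?_
      have h2 := cs_lemma hg' (show y - α ≤ y + α by linarith)
      rw [show y + α - (y - α) = 2 * α by ring] at h2
      exact h2.trans (mul_le_mul_of_nonneg_left (sqrt_sq_le_H1_right g) (Real.sqrt_nonneg _))
    -- Cauchy-Schwarz bound for averages
    have csb : ∀ g : ℝ → ℝ, MemLp g 2 volume →
        |fint α g y| ≤ (Real.sqrt α)⁻¹ * H1norm g ∧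
        |fint (-α) g y| ≤ (Real.sqrt α)⁻¹ * H1norm g := by
      intro g hg
      have hkey : ∀ a b : ℝ, a ≤ b → b - a = α →
          (1/α) * |∫ z in a..b, g z| ≤ (Real.sqrt α)⁻¹ * H1norm g := by
        intro a b hab hba
        have h1 : |∫ z in a..b, g z| ≤ Real.sqrt α * Real.sqrt (∫ x : ℝ, g x ^ 2) := by
          refine (intervalIntegral.abs_integral_le_integral_abs hab).trans ?_
          have h2 := cs_lemma hg hab
          rwa [hba] at h2
        calc (1/α) * |∫ z in a..b, g z|
            ≤ (1/α) * (Real.sqrt α * Real.sqrt (∫ x : ℝ, g x ^ 2)) :=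
              mul_le_mul_of_nonneg_left h1 (by positivity)
          _ = (Real.sqrt α)⁻¹ * Real.sqrt (∫ x : ℝ, g x ^ 2) := by
              rw [← mul_assoc, one_div_mul_sqrt hα]
          _ ≤ (Real.sqrt α)⁻¹ * H1norm g :=
              mul_le_mul_of_nonneg_left (sqrt_sq_le_H1_left g) (by positivity)
      constructor
      · rw [show fint α g y = (1/α) * ∫ z in (y - α)..y, g z from rfl,
          abs_mul, abs_of_pos (show (0:ℝ) < 1/α by positivity)]
        exact hkey (y - α) y (by linarith) (by ring)
      · rw [fint_neg hα.ne' g y, abs_mul,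
          abs_of_pos (show (0:ℝ) < 1/α by positivity)]
        exact hkey y (y + α) (by linarith) (by ring)
    have hS0 : 0 ≤ H1norm g₂ * G₁ + H1norm g₁ * G₂ :=
      add_nonneg (mul_nonneg hH₂0 hG₁0) (mul_nonneg hH₁0 hG₂0)
    -- Bound 1 (small α)
    have bound1 : |deltaOp α g₁ g₂ y| ≤
        Real.sqrt 2 * (Real.sqrt α)⁻¹ * (H1norm g₂ * G₁ + H1norm g₁ * G₂) := by
      have hdec : deltaOp α g₁ g₂ y =
          fint α g₁ y * (fint α g₂ y - fint (-α) g₂ y)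
          + (fint α g₁ y - fint (-α) g₁ y) * fint (-α) g₂ y := by
        unfold deltaOp; ring
      have hrw : Real.sqrt (2 * α) * (1/α) = Real.sqrt 2 * (Real.sqrt α)⁻¹ := by
        rw [Real.sqrt_mul (by norm_num : (0:ℝ) ≤ 2), mul_assoc,
          mul_comm (Real.sqrt α) (1/α), one_div_mul_sqrt hα]
      rw [hdec]
      calc |fint α g₁ y * (fint α g₂ y - fint (-α) g₂ y)
            + (fint α g₁ y - fint (-α) g₁ y) * fint (-α) g₂ y|
          ≤ |fint α g₁ y| * |fint α g₂ y - fint (-α) g₂ y|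
            + |fint α g₁ y - fint (-α) g₁ y| * |fint (-α) g₂ y| := by
            refine (abs_add_le _ _).trans ?_
            rw [abs_mul, abs_mul]
        _ ≤ ((1/α) * G₁) * (Real.sqrt (2 * α) * H1norm g₂)
            + (Real.sqrt (2 * α) * H1norm g₁) * ((1/α) * G₂) := by
            apply add_le_add
            · exact mul_le_mul (abs_fint_le hα y hgi₁)
                (diffb g₂ hd₂ hm₂' hgi₂) (abs_nonneg _) (by positivity)
            · exact mul_le_mul (diffb g₁ hd₁ hm₁' hgi₁)
                (abs_fint_neg_le hα y hgi₂) (abs_nonneg _) (by positivity)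
        _ = (Real.sqrt (2 * α) * (1/α)) * (H1norm g₂ * G₁ + H1norm g₁ * G₂) := by ring
        _ = Real.sqrt 2 * (Real.sqrt α)⁻¹ * (H1norm g₂ * G₁ + H1norm g₁ * G₂) := by
            rw [hrw]
    -- Bound 2 (large α)
    have bound2 : |deltaOp α g₁ g₂ y| ≤
        2 * (α⁻¹ * (Real.sqrt α)⁻¹) * (H1norm g₂ * G₁ + H1norm g₁ * G₂) := by
      have h1 : |deltaOp α g₁ g₂ y| ≤
          |fint α g₁ y| * |fint α g₂ y| + |fint (-α) g₁ y| * |fint (-α) g₂ y| := by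
        unfold deltaOp
        refine (abs_sub' _ _).trans ?_
        rw [abs_mul, abs_mul]
      refine h1.trans ?_
      have h2 : |fint α g₁ y| * |fint α g₂ y| ≤
          ((1/α) * G₁) * ((Real.sqrt α)⁻¹ * H1norm g₂) :=
        mul_le_mul (abs_fint_le hα y hgi₁) (csb g₂ hm₂).1 (abs_nonneg _) (by positivity)
      have h3 : |fint (-α) g₁ y| * |fint (-α) g₂ y| ≤
          ((1/α) * G₁) * ((Real.sqrt α)⁻¹ * H1norm g₂) :=
        mul_le_mul (abs_fint_neg_le hα y hgi₁) (csb g₂ hm₂).2 (abs_nonneg _) (by positivity)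
      have h4 : 0 ≤ α⁻¹ * (Real.sqrt α)⁻¹ * (H1norm g₁ * G₂) := by
        apply mul_nonneg (by positivity) (mul_nonneg hH₁0 hG₂0)
      calc |fint α g₁ y| * |fint α g₂ y| + |fint (-α) g₁ y| * |fint (-α) g₂ y|
          ≤ 2 * (((1/α) * G₁) * ((Real.sqrt α)⁻¹ * H1norm g₂)) := by linarith
        _ = 2 * (α⁻¹ * (Real.sqrt α)⁻¹) * (H1norm g₂ * G₁) := by
            rw [one_div]; ring
        _ ≤ 2 * (α⁻¹ * (Real.sqrt α)⁻¹) * (H1norm g₂ * G₁ + H1norm g₁ * G₂) := by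
            nlinarith [h4]
    rw [hI₁, hI₂]
    have hsqrt2 : Real.sqrt 2 ≤ 3 := by
      nlinarith [Real.sq_sqrt (show (0:ℝ) ≤ 2 by norm_num), Real.sqrt_nonneg 2]
    rcases le_total (α ^ (-(1:ℝ)/2)) (α ^ (-(3:ℝ)/2)) with h | h
    · rw [min_eq_left h, rpow_half_eq hα]
      refine bound1.trans ?_
      have key : 0 ≤ (3 - Real.sqrt 2) *
          ((Real.sqrt α)⁻¹ * (H1norm g₂ * G₁ + H1norm g₁ * G₂)) :=
        mul_nonneg (by linarith) (mul_nonneg (by positivity) hS0)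
      nlinarith [key]
    · rw [min_eq_right h, rpow_threehalf_eq hα]
      refine bound2.trans ?_
      have key : 0 ≤ (α⁻¹ * (Real.sqrt α)⁻¹) * (H1norm g₂ * G₁ + H1norm g₁ * G₂) :=
        mul_nonneg (by positivity) hS0
      nlinarith [key]
end

section
/- There is an absolute constant C such that for all s ∈ (0,1], all y ≥ 0 and all α > 0: |(1/α)∫_{−α}^{α} L_s(y+t) dt| ≤ C·s·y/(⟨y⟩ + ⟨α⟩), and |(1/α)∫_0^{α} ( L_s(y+t) − L_s(y−t) ) dt| ≤ C·s·[ 1_{{α ≤ y}}·α·ln(e+α)·⟨y⟩^{−2} + 1_{{y ≤ α}}·min{α, 1} ]. -/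
open MeasureTheory Real Set Filter

/- ### Auxiliary lemmas -/

lemma arctan_sub_le' {v u : ℝ} (hv : 0 ≤ v) (hvu : v ≤ u) :
    arctan u - arctan v ≤ (u - v) * (1 + v ^ 2)⁻¹ := by
  rw [← integral_inv_one_add_sq]
  have hc : Continuous fun x : ℝ => (1 + x ^ 2)⁻¹ :=
    (continuous_const.add (continuous_pow 2)).inv₀ (fun x => (by positivity : (1:ℝ) + x ^ 2 ≠ 0))
  calc ∫ x in v..u, (1 + x ^ 2)⁻¹
      ≤ ∫ _x in v..u, (1 + v ^ 2)⁻¹ := by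
        apply intervalIntegral.integral_mono_on hvu (hc.intervalIntegrable _ _)
          intervalIntegrable_const
        intro x hx
        exact inv_anti₀ (by positivity) (by nlinarith [hx.1])
    _ = (u - v) * (1 + v ^ 2)⁻¹ := by simp [smul_eq_mul]

lemma arctan_le_self' {x : ℝ} (hx : 0 ≤ x) : arctan x ≤ x := by
  have := arctan_sub_le' le_rfl hx
  simpa using this

lemma arctan_mono' : Monotone arctan := arctan_strictMono.monotone

lemma abs_arctan_le_abs (x : ℝ) : |arctan x| ≤ |x| := by
  rcases le_or_gt 0 x with h | h
  · have h1 : 0 ≤ arctan x := by rw [← arctan_zero]; exact arctan_mono' h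
    rw [abs_of_nonneg h1, abs_of_nonneg h]; exact arctan_le_self' h
  · have h1 : arctan x ≤ 0 := by rw [← arctan_zero]; exact arctan_mono' h.le
    rw [abs_of_nonpos h1, abs_of_neg h, ← arctan_neg]
    exact arctan_le_self' (by linarith)

lemma pi_div_two_sub_arctan_le {x : ℝ} (hx : 0 < x) : π / 2 - arctan x ≤ x⁻¹ := by
  rw [← arctan_inv_of_pos hx]
  exact arctan_le_self' (by positivity)

lemma abs_arctan_le_pi_div_two (x : ℝ) : |arctan x| ≤ π / 2 := by
  rw [abs_le]; exact ⟨(neg_pi_div_two_lt_arctan x).le, (arctan_lt_pi_div_two x).le⟩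

lemma Ls_cont (s : ℝ) : Continuous (Ls s) := by
  unfold Ls
  exact continuous_const.mul (Real.continuous_arctan.comp (continuous_const.mul continuous_id))

lemma Ls_abs_le {s : ℝ} (hs : 0 < s) (u : ℝ) : |Ls s u| ≤ s := by
  unfold Ls
  have hπ := Real.pi_pos
  rw [abs_mul, abs_of_nonneg (by positivity : (0:ℝ) ≤ 2 * s / π)]
  calc 2 * s / π * |arctan ((1 + s ^ 2 / 3) * u)|
      ≤ 2 * s / π * (π / 2) := by
        exact mul_le_mul_of_nonneg_left (abs_arctan_le_pi_div_two _) (by positivity)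
    _ = s := by field_simp

lemma Ls_abs_le_mul {s : ℝ} (hs : 0 < s) (hs1 : s ≤ 1) (u : ℝ) : |Ls s u| ≤ s * |u| := by
  unfold Ls
  have hπ := Real.pi_gt_three
  have h1 : |arctan ((1 + s ^ 2 / 3) * u)| ≤ (1 + s ^ 2 / 3) * |u| := by
    refine (abs_arctan_le_abs _).trans_eq ?_
    rw [abs_mul, abs_of_nonneg (by positivity : (0:ℝ) ≤ 1 + s ^ 2 / 3)]
  rw [abs_mul, abs_of_nonneg (by positivity : (0:ℝ) ≤ 2 * s / π)]
  calc 2 * s / π * |arctan ((1 + s ^ 2 / 3) * u)|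
      ≤ 2 * s / π * ((1 + s ^ 2 / 3) * |u|) := by
        exact mul_le_mul_of_nonneg_left h1 (by positivity)
    _ ≤ s * |u| := by
        rw [div_mul_eq_mul_div, div_le_iff₀ (by linarith)]
        have h2 : 2 * (1 + s ^ 2 / 3) ≤ π := by nlinarith
        have h3 := mul_le_mul_of_nonneg_left h2 (mul_nonneg hs.le (abs_nonneg u))
        nlinarith [h3]

lemma Ls_sub (s a b : ℝ) : Ls s a - Ls s b
    = (2 * s / Real.pi) * (arctan ((1 + s ^ 2 / 3) * a) - arctan ((1 + s ^ 2 / 3) * b)) := by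
  unfold Ls; ring

lemma Ls_odd (s x : ℝ) : Ls s (-x) = - Ls s x := by
  unfold Ls
  rw [mul_neg, arctan_neg]; ring

set_option maxHeartbeats 2000000 in
lemma Ls_part2_hard {s y α : ℝ} (hs : 0 < s) (hs1 : s ≤ 1) (hy : 0 ≤ y) (hα : 0 < α)
    (hαy : α < y) :
    (1 / α) * (∫ t in (0:ℝ)..α, (Ls s (y + t) - Ls s (y - t)))
      ≤ 100 * s * (α * Real.log (Real.exp 1 + α) * (1 + y ^ 2)⁻¹) := by
  have hπ := Real.pi_gt_three
  have hπ0 := Real.pi_pos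
  have hLc := Ls_cont s
  have hgc : Continuous (fun t => Ls s (y + t) - Ls s (y - t)) :=
    (hLc.comp (continuous_const.add continuous_id)).sub
      (hLc.comp (continuous_const.sub continuous_id))
  have he2 : (2:ℝ) ≤ Real.exp 1 := by
    have := Real.add_one_le_exp (1:ℝ); linarith
  have hlog1 : (1:ℝ) ≤ Real.log (Real.exp 1 + α) := by
    have h := Real.log_le_log (Real.exp_pos 1) (show Real.exp 1 ≤ Real.exp 1 + α by linarith)
    rwa [Real.log_exp] at h
  obtain ⟨c, hcdef⟩ : ∃ c : ℝ, c = 1 + s ^ 2 / 3 := ⟨_, rfl⟩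
  have hc1 : (1:ℝ) ≤ c := by rw [hcdef]; linarith [sq_nonneg s]
  have hc43 : c ≤ 4 / 3 := by rw [hcdef]; nlinarith [sq_nonneg s, sq_nonneg (1 - s)]
  rcases le_or_gt (2 * α) y with hcase | hcase
  · -- 2α ≤ y : pointwise bound 8 s (1+y²)⁻¹ t
    have hpt : ∀ t ∈ Icc (0:ℝ) α,
        Ls s (y + t) - Ls s (y - t) ≤ 8 * s * (1 + y ^ 2)⁻¹ * t := by
      intro t ht
      rw [Ls_sub, ← hcdef]
      have hyt : y / 2 ≤ y - t := by linarith [ht.2]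
      have hv0 : 0 ≤ c * (y - t) := mul_nonneg (by linarith) (by linarith)
      have h1 := arctan_sub_le' hv0
        (show c * (y - t) ≤ c * (y + t) by nlinarith [ht.1])
      have h2 : (1 + (c * (y - t)) ^ 2)⁻¹ ≤ 4 * (1 + y ^ 2)⁻¹ := by
        rw [show 4 * (1 + y ^ 2)⁻¹ = ((1 + y ^ 2) / 4)⁻¹ by rw [inv_div]; ring]
        apply inv_anti₀ (by positivity)
        nlinarith [hyt, ht.2, hc1, mul_le_mul hc1 hyt (by linarith) (by linarith)]
      have h3 : c * (y + t) - c * (y - t) ≤ 8 / 3 * t := by nlinarith [ht.1]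
      have h4 : arctan (c * (y + t)) - arctan (c * (y - t))
          ≤ (8 / 3 * t) * (4 * (1 + y ^ 2)⁻¹) := by
        refine h1.trans ?_
        exact mul_le_mul h3 h2 (by positivity) (by linarith [ht.1])
      calc 2 * s / π * (arctan (c * (y + t)) - arctan (c * (y - t)))
          ≤ 2 * s / π * ((8 / 3 * t) * (4 * (1 + y ^ 2)⁻¹)) := by
            exact mul_le_mul_of_nonneg_left h4 (by positivity)
        _ ≤ 8 * s * (1 + y ^ 2)⁻¹ * t := by
            rw [div_mul_eq_mul_div, div_le_iff₀ hπ0]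
            have hnn : (0:ℝ) ≤ s * ((1 + y ^ 2)⁻¹ * t) := by
              have := ht.1; positivity
            nlinarith [mul_le_mul_of_nonneg_left hπ.le hnn]
    have hmono := intervalIntegral.integral_mono_on (μ := volume) hα.le
      (hgc.intervalIntegrable _ _)
      ((continuous_const.mul continuous_id).intervalIntegrable (0:ℝ) α) hpt
    have hval : (∫ t in (0:ℝ)..α, 8 * s * (1 + y ^ 2)⁻¹ * t)
        = 8 * s * (1 + y ^ 2)⁻¹ * (α ^ 2 / 2) := by
      rw [intervalIntegral.integral_const_mul, integral_id]
      norm_num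
    have hIle : (∫ t in (0:ℝ)..α, (Ls s (y + t) - Ls s (y - t)))
        ≤ 8 * s * (1 + y ^ 2)⁻¹ * (α ^ 2 / 2) := by
      rw [← hval]; exact hmono
    calc (1 / α) * ∫ t in (0:ℝ)..α, (Ls s (y + t) - Ls s (y - t))
        ≤ (1 / α) * (8 * s * (1 + y ^ 2)⁻¹ * (α ^ 2 / 2)) := by
          exact mul_le_mul_of_nonneg_left hIle (by positivity)
      _ = 4 * s * α * (1 + y ^ 2)⁻¹ := by field_simp; ring
      _ ≤ 100 * s * (α * Real.log (Real.exp 1 + α) * (1 + y ^ 2)⁻¹) := by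
          have hnn : (0:ℝ) ≤ s * α * (1 + y ^ 2)⁻¹ := by positivity
          nlinarith [mul_le_mul_of_nonneg_left hlog1 (show (0:ℝ) ≤ 100 * (s * α * (1 + y ^ 2)⁻¹) by positivity)]

  · rcases le_or_gt y 2 with hy2 | hy2
    · -- y ≤ 2 : pointwise bound 2 s t
      have hpt : ∀ t ∈ Icc (0:ℝ) α, Ls s (y + t) - Ls s (y - t) ≤ 2 * s * t := by
        intro t ht
        rw [Ls_sub, ← hcdef]
        have hv0 : 0 ≤ c * (y - t) := mul_nonneg (by linarith) (by linarith [ht.2])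
        have h1 := arctan_sub_le' hv0
          (show c * (y - t) ≤ c * (y + t) by nlinarith [ht.1])
        have h2 : (1 + (c * (y - t)) ^ 2)⁻¹ ≤ 1 := by
          exact inv_le_one_of_one_le₀ (by nlinarith [sq_nonneg (c * (y - t))])
        have h4 : arctan (c * (y + t)) - arctan (c * (y - t)) ≤ 8 / 3 * t := by
          refine h1.trans ?_
          have h3 : c * (y + t) - c * (y - t) ≤ 8 / 3 * t := by nlinarith [ht.1]
          nlinarith [mul_le_mul h3 h2 (by positivity) (show (0:ℝ) ≤ 8/3*t by nlinarith [ht.1]),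
            mul_nonneg (sub_nonneg.mpr (show c * (y-t) ≤ c * (y+t) by nlinarith [ht.1])) (by positivity : (0:ℝ) ≤ (1 + (c * (y - t)) ^ 2)⁻¹)]
        calc 2 * s / π * (arctan (c * (y + t)) - arctan (c * (y - t)))
            ≤ 2 * s / π * (8 / 3 * t) := by
              exact mul_le_mul_of_nonneg_left h4 (by positivity)
          _ ≤ 2 * s * t := by
              rw [div_mul_eq_mul_div, div_le_iff₀ hπ0]
              have hnn : (0:ℝ) ≤ s * t := mul_nonneg hs.le ht.1
              nlinarith [mul_le_mul_of_nonneg_left hπ.le hnn]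
      have hmono := intervalIntegral.integral_mono_on (μ := volume) hα.le
        (hgc.intervalIntegrable _ _)
        ((continuous_const.mul continuous_id).intervalIntegrable (0:ℝ) α) hpt
      change _ ≤ ∫ t in (0:ℝ)..α, 2 * s * t at hmono
      have hval : (∫ t in (0:ℝ)..α, 2 * s * t) = s * α ^ 2 := by
        rw [intervalIntegral.integral_const_mul, integral_id]
        ring
      rw [hval] at hmono
      calc (1 / α) * ∫ t in (0:ℝ)..α, (Ls s (y + t) - Ls s (y - t))
          ≤ (1 / α) * (s * α ^ 2) := mul_le_mul_of_nonneg_left hmono (by positivity)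
        _ = s * α := by field_simp
        _ ≤ 100 * s * (α * Real.log (Real.exp 1 + α) * (1 + y ^ 2)⁻¹) := by
            have h5 : (1:ℝ) / 5 ≤ (1 + y ^ 2)⁻¹ := by
              rw [show (1:ℝ)/5 = ((5:ℝ))⁻¹ by norm_num]
              apply inv_anti₀ (by positivity)
              nlinarith
            have hnn : (0:ℝ) ≤ s * α := by positivity
            have h6 : s * α * 1 * (1/5) ≤ s * α * Real.log (Real.exp 1 + α) * (1 + y ^ 2)⁻¹ := by
              apply mul_le_mul
              · exact mul_le_mul_of_nonneg_left hlog1 hnn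
              · exact h5
              · norm_num
              · positivity
            nlinarith
    · -- 2 < y and y < 2α : the logarithmic case
      have hy0 : (0:ℝ) < y := by linarith
      -- I₂ ≤ ∫₀^y
      have hint1 : IntervalIntegrable (fun t => Ls s (y + t) - Ls s (y - t)) volume 0 α :=
        hgc.intervalIntegrable _ _
      have hint2 : IntervalIntegrable (fun t => Ls s (y + t) - Ls s (y - t)) volume α y :=
        hgc.intervalIntegrable _ _
      have hnn2 : 0 ≤ ∫ t in α..y, (Ls s (y + t) - Ls s (y - t)) := by
        apply intervalIntegral.integral_nonneg hαy.le
        intro t ht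
        rw [Ls_sub, ← hcdef]
        refine mul_nonneg (by positivity) (sub_nonneg.mpr (arctan_mono' ?_))
        nlinarith [ht.1, hα]
      have hsplit1 : (∫ t in (0:ℝ)..α, (Ls s (y + t) - Ls s (y - t)))
          + (∫ t in α..y, (Ls s (y + t) - Ls s (y - t)))
          = ∫ t in (0:ℝ)..y, (Ls s (y + t) - Ls s (y - t)) :=
        intervalIntegral.integral_add_adjacent_intervals hint1 hint2
      -- split ∫₀^y at y - 1
      have hint3 : IntervalIntegrable (fun t => Ls s (y + t) - Ls s (y - t)) volume 0 (y-1) :=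
        hgc.intervalIntegrable _ _
      have hint4 : IntervalIntegrable (fun t => Ls s (y + t) - Ls s (y - t)) volume (y-1) y :=
        hgc.intervalIntegrable _ _
      have hsplit2 : (∫ t in (0:ℝ)..(y-1), (Ls s (y + t) - Ls s (y - t)))
          + (∫ t in (y-1)..y, (Ls s (y + t) - Ls s (y - t)))
          = ∫ t in (0:ℝ)..y, (Ls s (y + t) - Ls s (y - t)) :=
        intervalIntegral.integral_add_adjacent_intervals hint3 hint4
      -- bound the tail piece by 2s
      have htail : (∫ t in (y-1)..y, (Ls s (y + t) - Ls s (y - t))) ≤ 2 * s := by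
        have hb : ∀ t ∈ Set.uIoc (y-1) y, ‖Ls s (y + t) - Ls s (y - t)‖ ≤ 2 * s := by
          intro t _
          rw [Real.norm_eq_abs]
          refine (abs_sub _ _).trans ?_
          have := Ls_abs_le hs (y + t)
          have := Ls_abs_le hs (y - t)
          linarith
        have h := intervalIntegral.norm_integral_le_of_norm_le_const hb
        rw [Real.norm_eq_abs, show y - (y - 1) = 1 by ring, abs_one, mul_one] at h
        exact (le_abs_self _).trans h
      -- bound the main piece by s log y
      have hmain : (∫ t in (0:ℝ)..(y-1), (Ls s (y + t) - Ls s (y - t)))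
          ≤ s * Real.log y := by
        have hy1' : (0:ℝ) ≤ y - 1 := by linarith
        have hpt : ∀ t ∈ Icc (0:ℝ) (y-1),
            Ls s (y + t) - Ls s (y - t) ≤ (2 * s / π) * (y - t)⁻¹ := by
          intro t ht
          rw [Ls_sub, ← hcdef]
          have hyt1 : (1:ℝ) ≤ y - t := by linarith [ht.2]
          have h1 : arctan (c * (y + t)) - arctan (c * (y - t))
              ≤ π / 2 - arctan (c * (y - t)) := by
            linarith [arctan_lt_pi_div_two (c * (y + t))]
          have h2 : π / 2 - arctan (c * (y - t)) ≤ (c * (y - t))⁻¹ :=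
            pi_div_two_sub_arctan_le (by nlinarith)
          have h3 : (c * (y - t))⁻¹ ≤ (y - t)⁻¹ := by
            apply inv_anti₀ (by linarith)
            nlinarith
          exact mul_le_mul_of_nonneg_left (h1.trans (h2.trans h3)) (by positivity)
        have hcont2 : ContinuousOn (fun t => (2 * s / π) * (y - t)⁻¹) (Set.uIcc 0 (y-1)) := by
          rw [Set.uIcc_of_le hy1']
          apply ContinuousOn.mul continuousOn_const
          apply ContinuousOn.inv₀ ((continuous_const.sub continuous_id).continuousOn)
          intro t ht
          have := ht.2
          intro hzero
          change y - t = 0 at hzero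
          nlinarith [ht.2]
        have hmono := intervalIntegral.integral_mono_on (μ := volume) hy1'
          (hgc.intervalIntegrable _ _) (hcont2.intervalIntegrable) hpt
        have hval : (∫ t in (0:ℝ)..(y-1), (2 * s / π) * (y - t)⁻¹)
            = (2 * s / π) * Real.log y := by
          rw [intervalIntegral.integral_const_mul]
          congr 1
          have h := intervalIntegral.integral_comp_sub_left (a := (0:ℝ)) (b := y - 1)
            (fun u => u⁻¹) y
          rw [show y - (y - 1) = 1 by ring, sub_zero] at h
          rw [h, integral_inv_of_pos one_pos hy0, div_one]
        rw [hval] at hmono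
        refine hmono.trans ?_
        have hlogy : 0 ≤ Real.log y := Real.log_nonneg (by linarith)
        rw [div_mul_eq_mul_div, div_le_iff₀ hπ0]
        nlinarith [mul_le_mul_of_nonneg_left hπ.le (mul_nonneg hs.le hlogy)]
      -- log y ≤ 2 log (e + α)
      have hlogy2 : Real.log y ≤ 2 * Real.log (Real.exp 1 + α) := by
        have h1 : y ≤ (Real.exp 1 + α) ^ 2 := by nlinarith
        calc Real.log y ≤ Real.log ((Real.exp 1 + α) ^ 2) := Real.log_le_log hy0 h1
          _ = 2 * Real.log (Real.exp 1 + α) := by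
              rw [show ((Real.exp 1 + α) ^ 2) = (Real.exp 1 + α) ^ (2:ℕ) by norm_num,
                Real.log_pow]
              norm_num
      have hItot : (∫ t in (0:ℝ)..α, (Ls s (y + t) - Ls s (y - t)))
          ≤ 4 * s * Real.log (Real.exp 1 + α) := by
        have h1 : (∫ t in (0:ℝ)..α, (Ls s (y + t) - Ls s (y - t)))
            ≤ ∫ t in (0:ℝ)..y, (Ls s (y + t) - Ls s (y - t)) := by linarith
        have h2 : (∫ t in (0:ℝ)..y, (Ls s (y + t) - Ls s (y - t)))
            ≤ s * Real.log y + 2 * s := by linarith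
        have h3 : s * Real.log y ≤ 2 * s * Real.log (Real.exp 1 + α) :=
          by nlinarith
        nlinarith
      have h4 : 4 * (1 + y ^ 2) ≤ 100 * α ^ 2 := by nlinarith
      have hL0 : (0:ℝ) ≤ Real.log (Real.exp 1 + α) := by linarith
      calc (1 / α) * ∫ t in (0:ℝ)..α, (Ls s (y + t) - Ls s (y - t))
          ≤ (1 / α) * (4 * s * Real.log (Real.exp 1 + α)) :=
            mul_le_mul_of_nonneg_left hItot (by positivity)
        _ = 4 * s * Real.log (Real.exp 1 + α) / α := by ring
        _ ≤ 100 * s * (α * Real.log (Real.exp 1 + α) * (1 + y ^ 2)⁻¹) := by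
            rw [show 100 * s * (α * Real.log (Real.exp 1 + α) * (1 + y ^ 2)⁻¹)
                = 100 * s * α * Real.log (Real.exp 1 + α) / (1 + y ^ 2) by
                  field_simp]
            rw [div_le_div_iff₀ hα (by positivity)]
            nlinarith [mul_le_mul_of_nonneg_left h4
              (mul_nonneg hs.le hL0), sq_nonneg α]


set_option maxHeartbeats 2000000 in
/-- Bounds on symmetric averages of the profile `L_s`. -/
theorem Ls_average_bounds :
    ∃ C : ℝ, 0 < C ∧ ∀ s : ℝ, 0 < s → s ≤ 1 → ∀ y : ℝ, 0 ≤ y → ∀ α : ℝ, 0 < α →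
      (|(1 / α) * ∫ t in (-α)..α, Ls s (y + t)|
          ≤ C * s * y / (Real.sqrt (1 + y ^ 2) + Real.sqrt (1 + α ^ 2))) ∧
      (|(1 / α) * ∫ t in (0:ℝ)..α, (Ls s (y + t) - Ls s (y - t))|
          ≤ C * s * ((if α ≤ y then α * Real.log (Real.exp 1 + α) * (1 + y ^ 2)⁻¹ else 0)
            + (if y ≤ α then min α 1 else 0))) := by
  refine ⟨100, by norm_num, ?_⟩
  intro s hs hs1 y hy α hα
  have hπ := Real.pi_gt_three
  have hπ0 := Real.pi_pos
  have hLc := Ls_cont s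
  -- facts about sqrt
  have h1y : Real.sqrt (1 + y ^ 2) ≤ 1 + y := by
    rw [show (1:ℝ) + y = Real.sqrt ((1 + y) ^ 2) from (Real.sqrt_sq (by positivity)).symm]
    exact Real.sqrt_le_sqrt (by nlinarith)
  have h1α : Real.sqrt (1 + α ^ 2) ≤ 1 + α := by
    rw [show (1:ℝ) + α = Real.sqrt ((1 + α) ^ 2) from (Real.sqrt_sq (by positivity)).symm]
    exact Real.sqrt_le_sqrt (by nlinarith)
  have hy1 : (1:ℝ) ≤ Real.sqrt (1 + y ^ 2) := by
    have := Real.sqrt_le_sqrt (show (1:ℝ) ≤ 1 + y ^ 2 by nlinarith)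
    rwa [Real.sqrt_one] at this
  have hα1 : (1:ℝ) ≤ Real.sqrt (1 + α ^ 2) := by
    have := Real.sqrt_le_sqrt (show (1:ℝ) ≤ 1 + α ^ 2 by nlinarith)
    rwa [Real.sqrt_one] at this
  set D : ℝ := Real.sqrt (1 + y ^ 2) + Real.sqrt (1 + α ^ 2) with hD
  have hD0 : 0 < D := by rw [hD]; linarith
  -- pointwise bound on Ls on [0, y+α]
  have hLb : ∀ x : ℝ, 0 ≤ x → x ≤ y + α → |Ls s x| ≤ s * min 1 (y + α) := by
    intro x hx0 hx
    rw [mul_min_of_nonneg _ _ hs.le, mul_one]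
    refine le_min (Ls_abs_le hs x) ?_
    refine (Ls_abs_le_mul hs hs1 x).trans ?_
    rw [abs_of_nonneg hx0]
    exact mul_le_mul_of_nonneg_left hx hs.le
  constructor
  · -- Part 1
    have hI : (∫ t in (-α)..α, Ls s (y + t)) = ∫ u in (y - α)..(y + α), Ls s u := by
      rw [intervalIntegral.integral_comp_add_left (fun u => Ls s u) y]
      norm_num [sub_eq_add_neg]
    have key1 : |∫ t in (-α)..α, Ls s (y + t)| ≤ 2 * min α y * (s * min 1 (y + α)) := by
      rw [hI]
      rcases le_total α y with hay | hya
      · -- α ≤ y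
        have hb : ∀ x ∈ Set.uIoc (y - α) (y + α), ‖Ls s x‖ ≤ s * min 1 (y + α) := by
          intro x hx
          rw [Set.uIoc_of_le (by linarith)] at hx
          rw [Real.norm_eq_abs]
          exact hLb x (by linarith [hx.1]) hx.2
        have := intervalIntegral.norm_integral_le_of_norm_le_const hb
        rw [Real.norm_eq_abs] at this
        rw [min_eq_left hay]
        calc |∫ u in (y - α)..(y + α), Ls s u| ≤ s * min 1 (y + α) * |y + α - (y - α)| := this
          _ = 2 * α * (s * min 1 (y + α)) := by
              rw [abs_of_nonneg (by linarith)]; ring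
      · -- y ≤ α
        have hint1 : IntervalIntegrable (Ls s) volume (y - α) (α - y) :=
          hLc.intervalIntegrable _ _
        have hint2 : IntervalIntegrable (Ls s) volume (α - y) (y + α) :=
          hLc.intervalIntegrable _ _
        have hsplit : (∫ u in (y - α)..(y + α), Ls s u)
            = (∫ u in (y - α)..(α - y), Ls s u) + ∫ u in (α - y)..(y + α), Ls s u :=
          (intervalIntegral.integral_add_adjacent_intervals hint1 hint2).symm
        have hzero : (∫ u in (y - α)..(α - y), Ls s u) = 0 := by
          have h1 : (∫ u in (y - α)..(α - y), Ls s (-u))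
              = ∫ u in (-(α - y))..(-(y - α)), Ls s u :=
            intervalIntegral.integral_comp_neg (fun u => Ls s u)
          have h2 : (∫ u in (y - α)..(α - y), Ls s (-u))
              = - ∫ u in (y - α)..(α - y), Ls s u := by
            simp only [Ls_odd]
            exact intervalIntegral.integral_neg
          rw [h2, show -(α - y) = y - α by ring, show -(y - α) = α - y by ring] at h1
          linarith
        have hb : ∀ x ∈ Set.uIoc (α - y) (y + α), ‖Ls s x‖ ≤ s * min 1 (y + α) := by
          intro x hx
          rw [Set.uIoc_of_le (by linarith)] at hx
          rw [Real.norm_eq_abs]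
          exact hLb x (by linarith [hx.1]) hx.2
        have h3 := intervalIntegral.norm_integral_le_of_norm_le_const hb
        rw [Real.norm_eq_abs] at h3
        rw [hsplit, hzero, zero_add, min_eq_right hya]
        calc |∫ u in (α - y)..(y + α), Ls s u| ≤ s * min 1 (y + α) * |y + α - (α - y)| := h3
          _ = 2 * y * (s * min 1 (y + α)) := by
              rw [abs_of_nonneg (by linarith)]; ring
    -- combine
    have hA : min 1 (y + α) * D ≤ 3 * (y + α) := by
      rcases le_total (y + α) 1 with h | h
      · rw [min_eq_right h]
        have : D ≤ 3 := by rw [hD]; linarith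
        nlinarith [hD0.le]
      · rw [min_eq_left h]
        rw [hD]; nlinarith
    have hB : min α y * (y + α) ≤ 2 * (α * y) := by
      rcases le_total α y with h | h
      · rw [min_eq_left h]; nlinarith
      · rw [min_eq_right h]; nlinarith
    have h0m : 0 ≤ min α y := le_min hα.le hy
    have h0m1 : 0 ≤ min 1 (y + α) := le_min zero_le_one (by linarith)
    have hcomb : 2 * min α y * (min 1 (y + α) * D) ≤ 12 * (α * y) := by
      calc 2 * min α y * (min 1 (y + α) * D) ≤ 2 * min α y * (3 * (y + α)) := by
            exact mul_le_mul_of_nonneg_left hA (by linarith)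
        _ = 6 * (min α y * (y + α)) := by ring
        _ ≤ 6 * (2 * (α * y)) := by linarith
        _ = 12 * (α * y) := by ring
    rw [le_div_iff₀ hD0]
    have habs : |(1 / α) * ∫ t in (-α)..α, Ls s (y + t)|
        = (1 / α) * |∫ t in (-α)..α, Ls s (y + t)| := by
      rw [abs_mul, abs_of_nonneg (by positivity : (0:ℝ) ≤ 1 / α)]
    rw [habs]
    have hgoal : 2 * min α y * (s * min 1 (y + α)) * D ≤ 100 * s * y * α := by
      nlinarith [mul_le_mul_of_nonneg_left hcomb hs.le, mul_nonneg (mul_nonneg hα.le hy) hs.le]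
    calc (1 / α) * |∫ t in (-α)..α, Ls s (y + t)| * D
        ≤ (1 / α) * (2 * min α y * (s * min 1 (y + α))) * D := by
          have := mul_le_mul_of_nonneg_left key1 (by positivity : (0:ℝ) ≤ 1 / α)
          exact mul_le_mul_of_nonneg_right this hD0.le
      _ = (2 * min α y * (s * min 1 (y + α)) * D) / α := by ring
      _ ≤ (100 * s * y * α) / α := by gcongr
      _ = 100 * s * y := by field_simp
  · -- Part 2
    have hgc : Continuous (fun t => Ls s (y + t) - Ls s (y - t)) :=
      (hLc.comp (continuous_const.add continuous_id)).sub
        (hLc.comp (continuous_const.sub continuous_id))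
    have he2 : (2:ℝ) ≤ Real.exp 1 := by
      have := Real.add_one_le_exp (1:ℝ); linarith
    have hlog1 : (1:ℝ) ≤ Real.log (Real.exp 1 + α) := by
      have h := Real.log_le_log (Real.exp_pos 1) (show Real.exp 1 ≤ Real.exp 1 + α by linarith)
      rwa [Real.log_exp] at h
    have hT1 : 0 ≤ (if α ≤ y then α * Real.log (Real.exp 1 + α) * (1 + y ^ 2)⁻¹ else 0) := by
      split
      · exact mul_nonneg (mul_nonneg hα.le (by linarith)) (by positivity)
      · exact le_rfl
    rcases le_or_gt y α with hyα | hαy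
    · -- case y ≤ α : use the min α 1 term
      rw [if_pos hyα]
      have hb : ∀ t ∈ Set.uIoc (0:ℝ) α, ‖Ls s (y + t) - Ls s (y - t)‖ ≤ s * min 2 (3 * α) := by
        intro t ht
        rw [Set.uIoc_of_le hα.le] at ht
        rw [Real.norm_eq_abs, mul_min_of_nonneg _ _ hs.le]
        refine (abs_sub _ _).trans (le_min ?_ ?_)
        · have := Ls_abs_le hs (y + t)
          have := Ls_abs_le hs (y - t)
          linarith
        · have h1 := Ls_abs_le_mul hs hs1 (y + t)
          have h2 := Ls_abs_le_mul hs hs1 (y - t)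
          have h3 : |y + t| ≤ 2 * α := by
            rw [abs_of_nonneg (by linarith [ht.1])]; linarith [ht.2]
          have h4 : |y - t| ≤ α := abs_le.mpr ⟨by linarith [ht.2], by linarith [ht.1]⟩
          have h5 := mul_le_mul_of_nonneg_left h3 hs.le
          have h6 := mul_le_mul_of_nonneg_left h4 hs.le
          nlinarith
      have key := intervalIntegral.norm_integral_le_of_norm_le_const hb
      rw [Real.norm_eq_abs, sub_zero, abs_of_pos hα] at key
      have hmin : min 2 (3 * α) ≤ 100 * min α 1 := by
        rcases le_total α 1 with h | h
        · rw [min_eq_left h]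
          calc min 2 (3 * α) ≤ 3 * α := min_le_right _ _
            _ ≤ 100 * α := by linarith
        · rw [min_eq_right h]
          calc min 2 (3 * α) ≤ 2 := min_le_left _ _
            _ ≤ 100 * 1 := by norm_num
      have habs : |(1 / α) * ∫ t in (0:ℝ)..α, (Ls s (y + t) - Ls s (y - t))|
          = (1 / α) * |∫ t in (0:ℝ)..α, (Ls s (y + t) - Ls s (y - t))| := by
        rw [abs_mul, abs_of_nonneg (by positivity : (0:ℝ) ≤ 1 / α)]
      rw [habs]
      have hstep : (1 / α) * |∫ t in (0:ℝ)..α, (Ls s (y + t) - Ls s (y - t))|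
          ≤ s * min 2 (3 * α) := by
        calc (1 / α) * |∫ t in (0:ℝ)..α, (Ls s (y + t) - Ls s (y - t))|
            ≤ (1 / α) * (s * min 2 (3 * α) * α) := by
              exact mul_le_mul_of_nonneg_left key (by positivity)
          _ = s * min 2 (3 * α) := by field_simp
      refine hstep.trans ?_
      have h7 : s * min 2 (3 * α) ≤ s * (100 * min α 1) := mul_le_mul_of_nonneg_left hmin hs.le
      nlinarith [mul_le_mul_of_nonneg_left hT1 (show (0:ℝ) ≤ 100 * s by positivity)]
    · -- case α < y
      rw [if_pos hαy.le, if_neg (not_le.mpr hαy), add_zero]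
      have hInn : 0 ≤ ∫ t in (0:ℝ)..α, (Ls s (y + t) - Ls s (y - t)) := by
        apply intervalIntegral.integral_nonneg hα.le
        intro t ht
        rw [Ls_sub]
        refine mul_nonneg (by positivity) (sub_nonneg.mpr (arctan_mono' ?_))
        nlinarith [ht.1, sq_nonneg s]
      have habs : |(1 / α) * ∫ t in (0:ℝ)..α, (Ls s (y + t) - Ls s (y - t))|
          = (1 / α) * ∫ t in (0:ℝ)..α, (Ls s (y + t) - Ls s (y - t)) := by
        rw [abs_of_nonneg (mul_nonneg (by positivity) hInn)]
      rw [habs]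
      exact Ls_part2_hard hs hs1 hy hα hαy
end
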